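/- Let H be a real Hilbert space, X a topological space, ψ : X → H weakly continuous with ‖ψ(·)‖ inf-compact, φ : X → ℝ bounded with ‖ψ(·)‖² + φ(·) lower semicontinuous, and y ∈ H. Then for every s ∈ ℝ, the set {x ∈ X : ½‖ψ(x) − u₀‖² + ½φ(x) + ⟨ψ(x), y⟩ ≤ s} is compact, where u₀ ∈ H is fixed. -/

import Mathlib

/-- If `ψ : X → H` is weakly continuous with `‖ψ(·)‖`
inf-compact, `φ` is bounded with `‖ψ(·)‖² + φ(·)` lower semicontinuous, then
for all `y, u₀ ∈ H` and `s ∈ ℝ` the set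
`{x : ½‖ψ(x) − u₀‖² + ½φ(x) + ⟨ψ(x), y⟩ ≤ s}` is compact. -/
theorem stmt19 {H : Type*} [NormedAddCommGroup H] [InnerProductSpace ℝ H]
    {X : Type*} [TopologicalSpace X] (ψ : X → H) (φ : X → ℝ)
    (hw : ∀ v : H, Continuous fun x => (inner ℝ (ψ x) v : ℝ))
    (hc : ∀ c : ℝ, IsCompact {x : X | ‖ψ x‖ ≤ c})
    (hφb : ∃ C : ℝ, ∀ x : X, |φ x| ≤ C)
    (hlsc : LowerSemicontinuous fun x => ‖ψ x‖ ^ 2 + φ x)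
    (y u₀ : H) (s : ℝ) :
    IsCompact {x : X |
      (1 / 2) * ‖ψ x - u₀‖ ^ 2 + (1 / 2) * φ x + (inner ℝ (ψ x) y : ℝ) ≤ s} := by
  obtain ⟨C, hC⟩ := hφb
  set g : X → ℝ := fun x => (‖ψ x‖ ^ 2 + φ x) + 2 * (inner ℝ (ψ x) (y - u₀) : ℝ)
    with hg
  have hglsc : LowerSemicontinuous g := by
    exact hlsc.add ((continuous_const.mul (hw (y - u₀))).lowerSemicontinuous)
  have hset : {x : X |
      (1 / 2) * ‖ψ x - u₀‖ ^ 2 + (1 / 2) * φ x + (inner ℝ (ψ x) y : ℝ) ≤ s}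
      = {x : X | g x ≤ 2 * s - ‖u₀‖ ^ 2} := by
    ext x
    simp only [Set.mem_setOf_eq, hg]
    have h1 : ‖ψ x - u₀‖ ^ 2 = ‖ψ x‖ ^ 2 - 2 * (inner ℝ (ψ x) u₀ : ℝ) + ‖u₀‖ ^ 2 := by
      rw [@norm_sub_sq_real]
    have h2 : (inner ℝ (ψ x) (y - u₀) : ℝ) = (inner ℝ (ψ x) y : ℝ) - (inner ℝ (ψ x) u₀ : ℝ) :=
      inner_sub_right _ _ _
    rw [h1, h2]; constructor <;> intro h <;> linarith
  rw [hset]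
  have hclosed : IsClosed {x : X | g x ≤ 2 * s - ‖u₀‖ ^ 2} := by
    rw [← isOpen_compl_iff, isOpen_iff_mem_nhds]
    intro x hx
    simp only [Set.mem_compl_iff, Set.mem_setOf_eq, not_le] at hx
    filter_upwards [hglsc x _ hx] with z hz
    simp only [Set.mem_compl_iff, Set.mem_setOf_eq, not_le]
    exact hz
  set a : ℝ := ‖y‖ + ‖u₀‖ with ha
  set B : ℝ := 2 * s + C + a ^ 2 with hB
  apply (hc (a + Real.sqrt B)).of_isClosed_subset hclosed
  intro x hx
  simp only [Set.mem_setOf_eq, hg] at hx ⊢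
  set t : ℝ := ‖ψ x‖ with ht
  have h1 : (inner ℝ (ψ x) (y - u₀) : ℝ) ≥ -(t * ‖y - u₀‖) := by
    have := abs_real_inner_le_norm (ψ x) (y - u₀)
    rw [abs_le] at this; linarith [this.1]
  have h2 : ‖y - u₀‖ ≤ a := by
    have := norm_sub_le y u₀; linarith
  have h3 : φ x ≥ -C := by have := hC x; rw [abs_le] at this; linarith [this.1]
  have ht0 : 0 ≤ t := norm_nonneg _
  have h4 : t ^ 2 - 2 * t * a ≤ 2 * s + C := by
    nlinarith [mul_le_mul_of_nonneg_left h2 ht0]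
  have h5 : (t - a) ^ 2 ≤ B := by rw [hB]; nlinarith
  have h6 : t - a ≤ Real.sqrt B := by
    calc t - a ≤ |t - a| := le_abs_self _
    _ = Real.sqrt ((t - a) ^ 2) := (Real.sqrt_sq_eq_abs _).symm
    _ ≤ Real.sqrt B := Real.sqrt_le_sqrt h5
  linarith
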